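/- Let T be a Borel automorphism of an uncountable standard Borel space (X, 𝓑) and let F₁, …, Fₙ be Borel subsets of X. Then there exist an aperiodic Borel automorphism S of X and a Borel automorphism Q of X whose support is countable such that (S ∘ Q)(Fᵢ) = T(Fᵢ) for every i = 1, …, n. (The aperiodic automorphisms are dense in the quotient group Aut₀(X, 𝓑) = Aut(X, 𝓑)/Ctbl(X) with respect to the quotient weak topology p₀.) -/

import Mathlib

open MeasureTheory Set

private lemma measurable_of_partition {X Y : Type*} [MeasurableSpace X] [MeasurableSpace Y]
    {ι : Type*} [Countable ι] {f : X → Y} (P : ι → Set X)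
    (hPm : ∀ i, MeasurableSet (P i)) (hcov : ∀ x, ∃ i, x ∈ P i)
    (G : ∀ i, (P i) → Y) (hGm : ∀ i, Measurable (G i))
    (hf : ∀ i x (hx : x ∈ P i), f x = G i ⟨x, hx⟩) : Measurable f := by
  intro B hB
  have hset : f ⁻¹' B = ⋃ i, Subtype.val '' ((G i) ⁻¹' B) := by
    ext x
    simp only [Set.mem_preimage, Set.mem_iUnion, Set.mem_image]
    constructor
    · intro hxB
      obtain ⟨i, hi⟩ := hcov x
      exact ⟨i, ⟨x, hi⟩, by rwa [← hf i x hi], rfl⟩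
    · rintro ⟨i, z, hz, rfl⟩
      rw [hf i z z.2, Subtype.coe_eta]; exact hz
  rw [hset]
  exact MeasurableSet.iUnion fun i => (hPm i).subtype_image (hGm i hB)

private lemma exists_glue_perm {X : Type*} [MeasurableSpace X] {ι : Type*} [Countable ι]
    (P Tq : ι → Set X) (hPm : ∀ i, MeasurableSet (P i)) (hTm : ∀ i, MeasurableSet (Tq i))
    (hP : ∀ x, ∃! i, x ∈ P i) (hTq : ∀ y, ∃! i, y ∈ Tq i)
    (φ : ∀ i, (P i) ≃ᵐ (Tq i)) :
    ∃ e : Equiv.Perm X, Measurable ⇑e ∧ Measurable ⇑e.symm ∧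
      ∀ i x (hx : x ∈ P i), e x = (φ i ⟨x, hx⟩ : X) := by
  classical
  choose idx hidx huni using hP
  choose tdx htdx tuni using hTq
  set f : X → X := fun x => (φ (idx x) ⟨x, hidx x⟩ : X) with hfdef
  set g : X → X := fun y => ((φ (tdx y)).symm ⟨y, htdx y⟩ : X) with hgdef
  have keyF : ∀ i x (hx : x ∈ P i), f x = (φ i ⟨x, hx⟩ : X) := by
    intro i x hx
    have h1 : i = idx x := huni x i hx
    subst h1; rfl
  have keyG : ∀ i y (hy : y ∈ Tq i), g y = ((φ i).symm ⟨y, hy⟩ : X) := by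
    intro i y hy
    have h1 : i = tdx y := tuni y i hy
    subst h1; rfl
  have hleft : ∀ x, g (f x) = x := by
    intro x
    have hfT : f x ∈ Tq (idx x) := (φ (idx x) ⟨x, hidx x⟩).2
    rw [keyG (idx x) (f x) hfT]
    have h2 : (⟨f x, hfT⟩ : Tq (idx x)) = φ (idx x) ⟨x, hidx x⟩ := Subtype.ext rfl
    rw [h2, MeasurableEquiv.symm_apply_apply]
  have hright : ∀ y, f (g y) = y := by
    intro y
    have hgP : g y ∈ P (tdx y) := ((φ (tdx y)).symm ⟨y, htdx y⟩).2
    rw [keyF (tdx y) (g y) hgP]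
    have h2 : (⟨g y, hgP⟩ : P (tdx y)) = (φ (tdx y)).symm ⟨y, htdx y⟩ := Subtype.ext rfl
    rw [h2, MeasurableEquiv.apply_symm_apply]
  refine ⟨⟨f, g, hleft, hright⟩, ?_, ?_, keyF⟩
  · exact measurable_of_partition P hPm (fun x => ⟨idx x, hidx x⟩)
      (fun i z => (φ i z : X)) (fun i => measurable_subtype_coe.comp (φ i).measurable)
      keyF
  · exact measurable_of_partition Tq hTm (fun y => ⟨tdx y, htdx y⟩)
      (fun i z => ((φ i).symm z : X)) (fun i => measurable_subtype_coe.comp (φ i).symm.measurable)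
      keyG

/-- `T` is a Borel automorphism: both `T` and its inverse are measurable. -/
def IsBorelAuto {X : Type*} [MeasurableSpace X] (T : Equiv.Perm X) : Prop :=
  Measurable T ∧ Measurable T.symm

/-- `T` is aperiodic: no point is periodic. -/
def IsAperiodic {X : Type*} (T : Equiv.Perm X) : Prop :=
  ∀ (x : X) (n : ℤ), n ≠ 0 → (T ^ n) x ≠ x

/-- aperiodic automorphisms are dense in `(Aut₀(X, 𝓑), p₀)`. -/
theorem aperiodic_dense_quotient_weak {X : Type*} [MeasurableSpace X]
    [StandardBorelSpace X] [Uncountable X]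
    (T : Equiv.Perm X) (hT : IsBorelAuto T)
    (n : ℕ) (F : Fin n → Set X) (hF : ∀ i, MeasurableSet (F i)) :
    ∃ S Q : Equiv.Perm X, IsBorelAuto S ∧ IsAperiodic S ∧
      IsBorelAuto Q ∧ {x : X | Q x ≠ x}.Countable ∧
      ∀ i, (⇑(S * Q)) '' F i = (⇑T) '' F i := by
  classical
  obtain ⟨hTmes, hTsymmes⟩ := hT
  -- the atom maps
  obtain ⟨a, hadef⟩ : ∃ a : X → (Fin n → Bool),
      ∀ x i, a x i = true ↔ x ∈ F i := by
    refine ⟨fun x i => if x ∈ F i then true else false, fun x i => ?_⟩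
    by_cases h : x ∈ F i <;> simp [h]
  obtain ⟨b, hbdef⟩ : ∃ b : X → (Fin n → Bool), ∀ y, b y = a (T.symm y) :=
    ⟨fun y => a (T.symm y), fun y => rfl⟩
  have hbT : ∀ x, b (T x) = a x := by intro x; rw [hbdef]; simp
  -- measurability of the fibers
  have hAmeas : ∀ s : Fin n → Bool, MeasurableSet (a ⁻¹' {s}) := by
    intro s
    have heq : a ⁻¹' {s} = ⋂ i, (if s i = true then F i else (F i)ᶜ) := by
      ext x
      simp only [mem_preimage, mem_singleton_iff, funext_iff, mem_iInter]
      refine forall_congr' fun i => ?_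
      by_cases hxi : x ∈ F i
      · have hax : a x i = true := (hadef x i).mpr hxi
        rcases Bool.eq_false_or_eq_true (s i) with hsi | hsi <;> simp [hsi, hax, hxi]
      · have hax : a x i = false := by
          cases h : a x i
          · rfl
          · exact absurd ((hadef x i).mp h) hxi
        rcases Bool.eq_false_or_eq_true (s i) with hsi | hsi <;> simp [hsi, hax, hxi]
    rw [heq]
    refine MeasurableSet.iInter fun i => ?_
    by_cases hsi : s i
    · simpa [hsi] using hF i
    · simpa [hsi] using (hF i).compl
  have hBpre : ∀ s : Fin n → Bool, b ⁻¹' {s} = T.symm ⁻¹' (a ⁻¹' {s}) := by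
    intro s; ext y; simp [hbdef y]
  have hBmeas : ∀ s : Fin n → Bool, MeasurableSet (b ⁻¹' {s}) := by
    intro s; rw [hBpre]; exact hTsymmes (hAmeas s)
  -- atoms of the double partition
  obtain ⟨V, hVmem⟩ : ∃ V : (Fin n → Bool) × (Fin n → Bool) → Set X,
      ∀ p x, x ∈ V p ↔ (a x = p.1 ∧ b x = p.2) :=
    ⟨fun p => {x | a x = p.1 ∧ b x = p.2}, fun p x => Iff.rfl⟩
  have hVself : ∀ x, x ∈ V (a x, b x) := fun x => (hVmem _ x).2 ⟨rfl, rfl⟩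
  have hVmeas : ∀ p, MeasurableSet (V p) := by
    intro p
    have heq : V p = a ⁻¹' {p.1} ∩ b ⁻¹' {p.2} := by
      ext x; rw [hVmem p x]; simp
    rw [heq]; exact (hAmeas p.1).inter (hBmeas p.2)
  -- relation between A and B atoms
  have hBA : ∀ s, b ⁻¹' {s} = T '' (a ⁻¹' {s}) := by
    intro s
    rw [Equiv.image_eq_preimage_symm]
    exact hBpre s
  have hABc : ∀ s, ((a ⁻¹' {s}).Countable ↔ (b ⁻¹' {s}).Countable) := by
    intro s
    constructor
    · intro h; rw [hBA s]; exact h.image _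
    · intro h
      have heq : a ⁻¹' {s} = T.symm '' (b ⁻¹' {s}) := by
        rw [hBA s, Equiv.symm_image_image]
      rw [heq]; exact h.image _
  -- the countable part
  obtain ⟨Xc, hXcmem⟩ : ∃ Xc : Set X, ∀ x, x ∈ Xc ↔ (V (a x, b x)).Countable :=
    ⟨{x | (V (a x, b x)).Countable}, fun x => Iff.rfl⟩
  have hXcC : Xc.Countable := by
    have hsub : Xc ⊆ ⋃ p ∈ {p : (Fin n → Bool) × (Fin n → Bool) | (V p).Countable}, V p := by
      intro x hx
      exact mem_biUnion ((hXcmem x).1 hx) (hVself x)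
    have hcnt : (⋃ p ∈ {p : (Fin n → Bool) × (Fin n → Bool) | (V p).Countable}, V p).Countable :=
      Set.Countable.biUnion (Set.to_countable
        {p : (Fin n → Bool) × (Fin n → Bool) | (V p).Countable}) (fun p hp => hp)
    exact hcnt.mono hsub
  have hVXc : ∀ p, (V p).Countable → V p ⊆ Xc := by
    intro p hp x hx
    obtain ⟨h1, h2⟩ := (hVmem p x).1 hx
    refine (hXcmem x).2 ?_
    rw [h1, h2, Prod.mk.eta]; exact hp
  have hAXc : ∀ s, (a ⁻¹' {s}).Countable → a ⁻¹' {s} ⊆ Xc := by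
    intro s hs x hx
    refine (hXcmem x).2 (hs.mono ?_)
    intro z hz
    have h1 : a z = a x := ((hVmem _ z).1 hz).1
    have hx' : a x = s := hx
    exact mem_preimage.mpr (mem_singleton_iff.mpr (h1.trans hx'))
  have hBXc : ∀ s, (b ⁻¹' {s}).Countable → b ⁻¹' {s} ⊆ Xc := by
    intro s hs x hx
    refine (hXcmem x).2 (hs.mono ?_)
    intro z hz
    have h1 : b z = b x := ((hVmem _ z).1 hz).2
    have hx' : b x = s := hx
    exact mem_preimage.mpr (mem_singleton_iff.mpr (h1.trans hx'))
  -- existence of an uncountable atom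
  have hU : ∃ p, ¬ (V p).Countable := by
    by_contra h
    push_neg at h
    have huniv : (univ : Set X) ⊆ ⋃ p, V p := fun x _ =>
      mem_iUnion.2 ⟨(a x, b x), hVself x⟩
    have hc : (univ : Set X).Countable := (countable_iUnion h).mono huniv
    exact not_countable (countable_univ_iff.mp hc)
  -- Borel isomorphisms on uncountable atoms
  have he : ∀ p, ¬ (V p).Countable → Nonempty ((V p) ≃ᵐ (ℝ × ℤ)) := by
    intro p hp
    haveI := (hVmeas p).standardBorel
    have h1 : ¬ Countable (V p) := fun h => hp (Set.countable_coe_iff.mp h)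
    exact ⟨PolishSpace.measurableEquivOfNotCountable h1 (not_countable)⟩
  have e : ∀ p, ¬ (V p).Countable → ((V p) ≃ᵐ (ℝ × ℤ)) := fun p hp => (he p hp).some
  -- the reservoirs
  obtain ⟨R', hR'pos, hR'neg⟩ : ∃ R' : (Fin n → Bool) × (Fin n → Bool) → Set X,
      (∀ p (hp : ¬ (V p).Countable),
        R' p = Subtype.val '' ((fun z : (V p) => (e p hp z).1) ⁻¹' (Set.range ((↑) : ℕ → ℝ)))) ∧
      (∀ p, (V p).Countable → R' p = ∅) :=
    ⟨fun p => if h : ¬ (V p).Countable then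
      Subtype.val '' ((fun z : (V p) => (e p h z).1) ⁻¹' (Set.range ((↑) : ℕ → ℝ))) else ∅,
      fun p hp => dif_pos hp, fun p hp => dif_neg (not_not_intro hp)⟩
  have hR'V : ∀ p, R' p ⊆ V p := by
    intro p
    by_cases hp : (V p).Countable
    · rw [hR'neg p hp]; exact empty_subset _
    · rw [hR'pos p hp]; exact Subtype.coe_image_subset _ _
  have hR'c : ∀ p, (R' p).Countable := by
    intro p
    by_cases hp : (V p).Countable
    · rw [hR'neg p hp]; exact countable_empty
    · rw [hR'pos p hp]
      have heq : ((fun z : (V p) => (e p hp z).1) ⁻¹' (Set.range ((↑) : ℕ → ℝ)))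
          = (e p hp) ⁻¹' ((Set.range ((↑) : ℕ → ℝ)) ×ˢ (univ : Set ℤ)) := by
        ext z; simp
      rw [heq]
      exact ((((Set.countable_range _).prod countable_univ).preimage
        (e p hp).injective)).image _
  have hR'inf : ∀ p (hp : ¬ (V p).Countable), (R' p).Infinite := by
    intro p hp
    refine Set.infinite_of_injective_forall_mem
      (f := fun m : ℕ => ((e p hp).symm ((m : ℝ), 0) : X)) ?_ ?_
    · intro m1 m2 h
      have h2 := Subtype.coe_injective h
      have h3 := (e p hp).symm.injective h2
      have h4 : (m1 : ℝ) = (m2 : ℝ) := congrArg Prod.fst h3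
      exact_mod_cast h4
    · intro m
      rw [hR'pos p hp]
      refine ⟨(e p hp).symm ((m : ℝ), 0), ?_, rfl⟩
      show ((e p hp) ((e p hp).symm ((m : ℝ), 0))).1 ∈ Set.range ((↑) : ℕ → ℝ)
      rw [MeasurableEquiv.apply_symm_apply]
      exact ⟨m, rfl⟩
  obtain ⟨R, hRmem, hRc⟩ : ∃ R : Set X, (∀ x, x ∈ R ↔ ∃ p, x ∈ R' p) ∧ R.Countable :=
    ⟨⋃ p, R' p, fun x => mem_iUnion, countable_iUnion hR'c⟩
  -- the countable "garbage" set D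
  obtain ⟨D, hDmem, hDeq⟩ : ∃ D : Set X, (∀ x, x ∈ D ↔ (x ∈ Xc ∨ x ∈ R)) ∧ D = Xc ∪ R :=
    ⟨Xc ∪ R, fun x => mem_union x Xc R, rfl⟩
  have hDc : D.Countable := by rw [hDeq]; exact hXcC.union hRc
  have hDm : MeasurableSet D := hDc.measurableSet
  have hXcD : Xc ⊆ D := fun x hx => (hDmem x).2 (Or.inl hx)
  have hR'D : ∀ p, R' p ⊆ D := fun p x hx => (hDmem x).2 (Or.inr ((hRmem x).2 ⟨p, hx⟩))
  have hDinf : D.Infinite := by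
    obtain ⟨p₀, hp₀⟩ := hU
    exact ((hR'inf p₀ hp₀).mono (hR'D p₀))
  haveI hDcount : Countable (D : Set X) := hDc.to_subtype
  haveI hDinfi : Infinite (D : Set X) := hDinf.to_subtype
  obtain ⟨ψ⟩ : Nonempty ((D : Set X) ≃ ℤ) := nonempty_equiv_of_countable
  -- the level function L
  obtain ⟨L, hLD, hLnD⟩ : ∃ L : X → ℤ, (∀ x (h : x ∈ D), L x = ψ ⟨x, h⟩) ∧
      (∀ p (hp : ¬ (V p).Countable) x (hx : x ∈ V p), x ∉ D → L x = (e p hp ⟨x, hx⟩).2) := by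
    refine ⟨fun x => if h : x ∈ D then ψ ⟨x, h⟩ else
      (if h2 : ¬ (V (a x, b x)).Countable then (e (a x, b x) h2 ⟨x, hVself x⟩).2 else 0),
      fun x h => dif_pos h, ?_⟩
    intro p hp x hx hxD
    have hcx : (a x, b x) = p := by
      obtain ⟨h1, h2⟩ := (hVmem p x).1 hx
      rw [h1, h2]
    subst hcx
    simp only [dif_neg hxD, dif_pos hp]
  have hLmes : ∀ k : ℤ, MeasurableSet (L ⁻¹' {k}) := by
    intro k
    have hdecomp : L ⁻¹' {k} = (L ⁻¹' {k} ∩ D) ∪ ⋃ p, (L ⁻¹' {k} ∩ (V p \ D)) := by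
      ext x
      constructor
      · intro hx
        by_cases hxD : x ∈ D
        · exact Or.inl ⟨hx, hxD⟩
        · exact Or.inr (mem_iUnion.2 ⟨(a x, b x), hx, hVself x, hxD⟩)
      · rintro (⟨h, _⟩ | h)
        · exact h
        · obtain ⟨p, hp⟩ := mem_iUnion.1 h
          exact hp.1
    rw [hdecomp]
    refine ((hDc.mono inter_subset_right).measurableSet).union
      (MeasurableSet.iUnion fun p => ?_)
    by_cases hp : (V p).Countable
    · exact ((hp.mono ((inter_subset_right).trans diff_subset)).measurableSet)
    · have heq : L ⁻¹' {k} ∩ (V p \ D) =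
          (Subtype.val '' ((fun z : (V p) => (e p hp z).2) ⁻¹' {k})) ∩ (V p \ D) := by
        ext x
        simp only [mem_inter_iff, mem_preimage, mem_singleton_iff, mem_image, mem_diff]
        constructor
        · rintro ⟨hLx, hxV, hxD⟩
          exact ⟨⟨⟨x, hxV⟩, by rw [← hLnD p hp x hxV hxD]; exact hLx, rfl⟩, hxV, hxD⟩
        · rintro ⟨⟨z, hz, rfl⟩, h2⟩
          refine ⟨?_, h2⟩
          rw [hLnD p hp (z : X) z.2 h2.2, Subtype.coe_eta]
          exact hz
      rw [heq]
      exact ((hVmeas p).subtype_image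
        ((measurable_snd.comp (e p hp).measurable) (measurableSet_singleton k))).inter
        ((hVmeas p).diff hDm)
  -- the domain and target pieces
  obtain ⟨Dom, hDomMem⟩ : ∃ Dom : (Fin n → Bool) → ℤ → Set X,
      ∀ s k x, x ∈ Dom s k ↔ (x ∉ D ∧ a x = s ∧ L x = k) :=
    ⟨fun s k => {x | x ∉ D ∧ a x = s ∧ L x = k}, fun s k x => Iff.rfl⟩
  obtain ⟨Tgt, hTgtMem⟩ : ∃ Tgt : (Fin n → Bool) → ℤ → Set X,
      ∀ s k x, x ∈ Tgt s k ↔ (x ∉ D ∧ b x = s ∧ L x = k) :=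
    ⟨fun s k => {x | x ∉ D ∧ b x = s ∧ L x = k}, fun s k x => Iff.rfl⟩
  have hDomMeas : ∀ s k, MeasurableSet (Dom s k) := by
    intro s k
    have heq : Dom s k = Dᶜ ∩ (a ⁻¹' {s} ∩ L ⁻¹' {k}) := by
      ext x; rw [hDomMem s k x]; simp [mem_compl_iff, and_assoc]
    rw [heq]
    exact hDm.compl.inter ((hAmeas s).inter (hLmes k))
  have hTgtMeas : ∀ s k, MeasurableSet (Tgt s k) := by
    intro s k
    have heq : Tgt s k = Dᶜ ∩ (b ⁻¹' {s} ∩ L ⁻¹' {k}) := by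
      ext x; rw [hTgtMem s k x]; simp [mem_compl_iff, and_assoc]
    rw [heq]
    exact hDm.compl.inter ((hBmeas s).inter (hLmes k))
  -- generic point construction: uncountability of the pieces
  have hpiece : ∀ (p : (Fin n → Bool) × (Fin n → Bool)) (hp : ¬ (V p).Countable) (k : ℤ) (r : ℝ),
      (((e p hp).symm (-Real.exp r, k) : X) ∉ D) ∧
      a ((e p hp).symm (-Real.exp r, k) : X) = p.1 ∧
      b ((e p hp).symm (-Real.exp r, k) : X) = p.2 ∧
      L ((e p hp).symm (-Real.exp r, k) : X) = k := by
    intro p hp k r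
    set z := (e p hp).symm (-Real.exp r, k) with hz
    have hzV : (z : X) ∈ V p := z.2
    obtain ⟨hza, hzb⟩ := (hVmem p (z : X)).1 hzV
    have hzXc : (z : X) ∉ Xc := by
      intro h
      have hc := (hXcmem _).1 h
      rw [hza, hzb, Prod.mk.eta] at hc
      exact hp hc
    have hzR : (z : X) ∉ R := by
      intro hR
      obtain ⟨p', hp'⟩ := (hRmem _).1 hR
      have hzVp' : (z : X) ∈ V p' := hR'V p' hp'
      obtain ⟨h1, h2⟩ := (hVmem p' (z : X)).1 hzVp'
      have hp'eq : p' = p := Prod.ext (h1.symm.trans hza) (h2.symm.trans hzb)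
      subst hp'eq
      rw [hR'pos p' hp] at hp'
      obtain ⟨w, hw, hwz⟩ := hp'
      have hwzz : w = z := Subtype.coe_injective hwz
      rw [hwzz] at hw
      have hwK : ((e p' hp) z).1 ∈ Set.range ((↑) : ℕ → ℝ) := hw
      rw [hz, MeasurableEquiv.apply_symm_apply] at hwK
      have hwK' : -Real.exp r ∈ Set.range ((↑) : ℕ → ℝ) := hwK
      obtain ⟨m, hm⟩ := hwK'
      have h5 : (0 : ℝ) < Real.exp r := Real.exp_pos r
      have h6 : (0 : ℝ) ≤ (m : ℝ) := Nat.cast_nonneg m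
      rw [hm] at h6
      linarith
    have hzD : (z : X) ∉ D := fun h => ((hDmem _).1 h).elim hzXc hzR
    refine ⟨hzD, hza, hzb, ?_⟩
    rw [hLnD p hp (z : X) hzV hzD]
    have h7 : (⟨(z : X), hzV⟩ : (V p)) = z := Subtype.ext rfl
    rw [h7, hz, MeasurableEquiv.apply_symm_apply]
  have hpinj : ∀ (p : (Fin n → Bool) × (Fin n → Bool)) (hp : ¬ (V p).Countable) (k : ℤ),
      Function.Injective (fun r : ℝ => ((e p hp).symm (-Real.exp r, k) : X)) := by
    intro p hp k r1 r2 h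
    have h2 := Subtype.coe_injective h
    have h3 := (e p hp).symm.injective h2
    have h4 : -Real.exp r1 = -Real.exp r2 := congrArg Prod.fst h3
    exact Real.exp_injective (neg_injective h4)
  have hexu_tA : ∀ s, ¬ (a ⁻¹' {s}).Countable → ∃ t, ¬ (V (s, t)).Countable := by
    intro s hs
    by_contra h
    push_neg at h
    apply hs
    have hsub : a ⁻¹' {s} ⊆ ⋃ t, V (s, t) := by
      intro x hx
      exact mem_iUnion.2 ⟨b x, (hVmem _ x).2 ⟨hx, rfl⟩⟩
    exact (countable_iUnion h).mono hsub
  have hexu_tB : ∀ s, ¬ (b ⁻¹' {s}).Countable → ∃ t, ¬ (V (t, s)).Countable := by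
    intro s hs
    by_contra h
    push_neg at h
    apply hs
    have hsub : b ⁻¹' {s} ⊆ ⋃ t, V (t, s) := by
      intro x hx
      exact mem_iUnion.2 ⟨a x, (hVmem _ x).2 ⟨rfl, hx⟩⟩
    exact (countable_iUnion h).mono hsub
  have hDomUnc : ∀ s k, ¬ (a ⁻¹' {s}).Countable → ¬ (Dom s k).Countable := by
    intro s k hs hc
    obtain ⟨t, ht⟩ := hexu_tA s hs
    have hmem : ∀ r : ℝ, ((e (s, t) ht).symm (-Real.exp r, k) : X) ∈ Dom s k := by
      intro r
      obtain ⟨h1, h2, h3, h4⟩ := hpiece (s, t) ht k r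
      exact (hDomMem s k _).2 ⟨h1, h2, h4⟩
    have hcr := hc.mono (range_subset_iff.2 hmem)
    haveI := hcr.to_subtype
    have hR : Countable ℝ := Countable.of_equiv _ (Equiv.ofInjective _ (hpinj (s, t) ht k)).symm
    exact not_countable hR
  have hTgtUnc : ∀ s k, ¬ (b ⁻¹' {s}).Countable → ¬ (Tgt s k).Countable := by
    intro s k hs hc
    obtain ⟨t, ht⟩ := hexu_tB s hs
    have hmem : ∀ r : ℝ, ((e (t, s) ht).symm (-Real.exp r, k) : X) ∈ Tgt s k := by
      intro r
      obtain ⟨h1, h2, h3, h4⟩ := hpiece (t, s) ht k r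
      exact (hTgtMem s k _).2 ⟨h1, h3, h4⟩
    have hcr := hc.mono (range_subset_iff.2 hmem)
    haveI := hcr.to_subtype
    have hR : Countable ℝ := Countable.of_equiv _ (Equiv.ofInjective _ (hpinj (t, s) ht k)).symm
    exact not_countable hR
  -- the pieces for S
  have hφS : ∀ o : Option ((Fin n → Bool) × ℤ), Nonempty
      {f : ((Option.elim o D fun q => Dom q.1 q.2 : Set X)) ≃ᵐ
           ((Option.elim o D fun q => Tgt q.1 (q.2 + 1) : Set X)) //
        ∀ z, L ((f z : X)) = L ((z : X)) + 1} := by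
    rintro (_ | ⟨s, k⟩) <;> simp only [Option.elim]
    · refine ⟨⟨⟨(ψ.trans (Equiv.addRight (1 : ℤ))).trans ψ.symm,
        @measurable_of_countable _ _ _ _ _ Subtype.instMeasurableSingletonClass _, @measurable_of_countable _ _ _ _ _ Subtype.instMeasurableSingletonClass _⟩, ?_⟩⟩
      intro z
      show L ((((ψ.trans (Equiv.addRight (1 : ℤ))).trans ψ.symm) z : X)) = L ((z : X)) + 1
      rw [hLD _ ((((ψ.trans (Equiv.addRight (1 : ℤ))).trans ψ.symm)) z).2, Subtype.coe_eta,
        hLD _ z.2, Subtype.coe_eta]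
      simp
    · by_cases hs : (a ⁻¹' {s}).Countable
      · haveI h1 : IsEmpty ((Dom s k : Set X)) := by
          refine ⟨fun z => ?_⟩
          have hz := (hDomMem s k (z : X)).1 z.2
          exact hz.1 (hXcD (hAXc s hs (mem_preimage.mpr (mem_singleton_iff.mpr hz.2.1))))
        haveI h2 : IsEmpty ((Tgt s (k + 1) : Set X)) := by
          refine ⟨fun z => ?_⟩
          have hz := (hTgtMem s (k + 1) (z : X)).1 z.2
          exact hz.1 (hXcD (hBXc s ((hABc s).mp hs)
            (mem_preimage.mpr (mem_singleton_iff.mpr hz.2.1))))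
        exact ⟨⟨⟨Equiv.equivOfIsEmpty _ _, @measurable_of_countable _ _ _ _ _ Subtype.instMeasurableSingletonClass _,
          @measurable_of_countable _ _ _ _ _ Subtype.instMeasurableSingletonClass _⟩, fun z => (h1.false z).elim⟩⟩
      · haveI := (hDomMeas s k).standardBorel
        haveI := (hTgtMeas s (k + 1)).standardBorel
        have hbu : ¬ (b ⁻¹' {s}).Countable := fun h => hs ((hABc s).mpr h)
        have f1 : ((Dom s k : Set X)) ≃ᵐ ℝ :=
          PolishSpace.measurableEquivOfNotCountable
            (fun h => hDomUnc s k hs (Set.countable_coe_iff.mp h)) (not_countable)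
        have f2 : ((Tgt s (k + 1) : Set X)) ≃ᵐ ℝ :=
          PolishSpace.measurableEquivOfNotCountable
            (fun h => hTgtUnc s (k + 1) hbu (Set.countable_coe_iff.mp h)) (not_countable)
        refine ⟨⟨f1.trans f2.symm, ?_⟩⟩
        intro z
        have hz1 : L ((z : X)) = k := ((hDomMem s k _).1 z.2).2.2
        have hz2 : L (((f1.trans f2.symm) z : X)) = k + 1 :=
          ((hTgtMem s (k + 1) _).1 ((f1.trans f2.symm) z).2).2.2
        rw [hz1]; exact hz2
  have φS := fun o => (hφS o).some
  -- partitions for S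
  have hPSpart : ∀ x : X, ∃! o : Option ((Fin n → Bool) × ℤ),
      x ∈ (Option.elim o D fun q => Dom q.1 q.2 : Set X) := by
    intro x
    by_cases hx : x ∈ D
    · refine ⟨none, hx, ?_⟩
      rintro (_ | ⟨s, k⟩) h
      · rfl
      · exact absurd hx ((hDomMem s k x).1 h).1
    · refine ⟨some (a x, L x), (hDomMem _ _ x).2 ⟨hx, rfl, rfl⟩, ?_⟩
      rintro (_ | ⟨s, k⟩) h
      · exact absurd h hx
      · obtain ⟨h1, h2, h3⟩ := (hDomMem s k x).1 h
        rw [h2, h3]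
  have hTSpart : ∀ y : X, ∃! o : Option ((Fin n → Bool) × ℤ),
      y ∈ (Option.elim o D fun q => Tgt q.1 (q.2 + 1) : Set X) := by
    intro y
    by_cases hy : y ∈ D
    · refine ⟨none, hy, ?_⟩
      rintro (_ | ⟨s, k⟩) h
      · rfl
      · exact absurd hy ((hTgtMem s (k + 1) y).1 h).1
    · refine ⟨some (b y, L y - 1), (hTgtMem _ _ y).2 ⟨hy, rfl, by omega⟩, ?_⟩
      rintro (_ | ⟨s, k⟩) h
      · exact absurd h hy
      · obtain ⟨h1, h2, h3⟩ := (hTgtMem s (k + 1) y).1 h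
        have hk : k = L y - 1 := by omega
        rw [h2, hk]
  obtain ⟨S, hSmes, hSsmes, hSpt⟩ := exists_glue_perm
    (fun o => (Option.elim o D fun q => Dom q.1 q.2 : Set X))
    (fun o => (Option.elim o D fun q => Tgt q.1 (q.2 + 1) : Set X))
    (by rintro (_ | ⟨s, k⟩); exacts [hDm, hDomMeas s k])
    (by rintro (_ | ⟨s, k⟩); exacts [hDm, hTgtMeas s (k + 1)])
    hPSpart hTSpart (fun o => (φS o).1)
  -- key properties of S
  have hSL : ∀ x, L (S x) = L x + 1 := by
    intro x
    by_cases hx : x ∈ D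
    · rw [hSpt none x hx]
      exact (φS none).2 ⟨x, hx⟩
    · have hxm : x ∈ Dom (a x) (L x) := (hDomMem _ _ x).2 ⟨hx, rfl, rfl⟩
      rw [hSpt (some (a x, L x)) x hxm]
      exact (φS (some (a x, L x))).2 ⟨x, hxm⟩
  have hSDmem : ∀ x, x ∈ D → S x ∈ D := by
    intro x hx
    rw [hSpt none x hx]
    exact ((φS none).1 ⟨x, hx⟩).2
  have hSnD : ∀ x, x ∉ D → (S x ∉ D ∧ b (S x) = a x) := by
    intro x hx
    have hxm : x ∈ Dom (a x) (L x) := (hDomMem _ _ x).2 ⟨hx, rfl, rfl⟩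
    rw [hSpt (some (a x, L x)) x hxm]
    have h3 := (hTgtMem _ _ _).1 ((φS (some (a x, L x))).1 ⟨x, hxm⟩).2
    exact ⟨h3.1, h3.2.1⟩
  have hSD_iff : ∀ x, S x ∈ D ↔ x ∈ D := by
    intro x
    constructor
    · intro h
      by_contra hx
      exact (hSnD x hx).1 h
    · exact hSDmem x
  -- aperiodicity
  have hSLinv : ∀ x, L (S.symm x) = L x - 1 := by
    intro x
    have h1 := hSL (S.symm x)
    rw [Equiv.apply_symm_apply] at h1
    omega
  have hiterZ : ∀ (k : ℤ) (x : X), L ((S ^ k) x) = L x + k := by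
    intro k
    induction k using Int.induction_on with
    | zero => intro x; simp
    | succ i ih =>
      intro x
      have h1 : (S ^ ((i : ℤ) + 1)) x = (S ^ (i : ℤ)) (S x) := by
        rw [zpow_add_one]; rfl
      rw [h1, ih (S x), hSL x]; ring
    | pred i ih =>
      intro x
      have h1 : (S ^ (-(i : ℤ) - 1)) x = (S ^ (-(i : ℤ))) (S.symm x) := by
        rw [zpow_sub_one]; rfl
      rw [h1, ih (S.symm x), hSLinv x]; ring
  have hSaper : IsAperiodic S := by
    intro x m hm heq
    have h1 := hiterZ m x
    rw [heq] at h1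
    omega
  -- the Q pieces
  have hE1 : ∀ s : Fin n → Bool,
      ({z : X | z ∈ D ∧ b (S z) = s} : Set X) ≃ ({w : X | b w = s ∧ w ∈ D} : Set X) := by
    intro s
    refine ⟨fun z => ⟨S (z : X), z.2.2, hSDmem _ z.2.1⟩,
      fun w => ⟨S.symm (w : X), ?_, ?_⟩, ?_, ?_⟩
    · rw [← hSD_iff, Equiv.apply_symm_apply]
      exact w.2.2
    · rw [Equiv.apply_symm_apply]
      exact w.2.1
    · intro z
      apply Subtype.ext
      show S.symm (S (z : X)) = (z : X)
      rw [Equiv.symm_apply_apply]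
    · intro w
      apply Subtype.ext
      show S (S.symm (w : X)) = (w : X)
      rw [Equiv.apply_symm_apply]
  have hφQ : ∀ o : Option (Fin n → Bool), Nonempty
      {f : ((Option.elim o (Dᶜ) fun s => {x | a x = s ∧ x ∈ D} : Set X)) ≃ᵐ
           ((Option.elim o (Dᶜ) fun s => {z | z ∈ D ∧ b (S z) = s} : Set X)) //
        ∀ z, o = none → ((f z : X)) = ((z : X))} := by
    rintro (_ | s) <;> simp only [Option.elim]
    · exact ⟨⟨MeasurableEquiv.refl _, fun z _ => rfl⟩⟩
    · have hQc1 : ({x | a x = s ∧ x ∈ D} : Set X).Countable := hDc.mono (fun x hx => hx.2)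
      have hQc2 : ({z | z ∈ D ∧ b (S z) = s} : Set X).Countable := hDc.mono (fun x hx => hx.1)
      haveI := hQc1.to_subtype
      haveI := hQc2.to_subtype
      suffices h : Nonempty (({x | a x = s ∧ x ∈ D} : Set X) ≃
          ({z | z ∈ D ∧ b (S z) = s} : Set X)) by
        obtain ⟨q⟩ := h
        exact ⟨⟨⟨q, @measurable_of_countable _ _ _ _ _ Subtype.instMeasurableSingletonClass _, @measurable_of_countable _ _ _ _ _ Subtype.instMeasurableSingletonClass _⟩,
          fun z h => nomatch h⟩⟩
      by_cases hs : (a ⁻¹' {s}).Countable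
      · -- use T itself
        have hbs : (b ⁻¹' {s}).Countable := (hABc s).mp hs
        have eqAB : ({x | a x = s ∧ x ∈ D} : Set X) ≃ ({w : X | b w = s ∧ w ∈ D} : Set X) := by
          refine ⟨fun x => ⟨T (x : X), ?_, ?_⟩, fun w => ⟨T.symm (w : X), ?_, ?_⟩, ?_, ?_⟩
          · show b (T (x : X)) = s
            rw [hbT]; exact x.2.1
          · refine hXcD (hBXc s hbs (mem_preimage.mpr (mem_singleton_iff.mpr ?_)))
            rw [hbT]; exact x.2.1
          · show a (T.symm (w : X)) = s
            rw [← hbdef]; exact w.2.1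
          · refine hXcD (hAXc s hs (mem_preimage.mpr (mem_singleton_iff.mpr ?_)))
            rw [← hbdef]; exact w.2.1
          · intro x
            apply Subtype.ext
            show T.symm (T (x : X)) = (x : X)
            rw [Equiv.symm_apply_apply]
          · intro w
            apply Subtype.ext
            show T (T.symm (w : X)) = (w : X)
            rw [Equiv.apply_symm_apply]
        exact ⟨eqAB.trans (hE1 s).symm⟩
      · -- both sides are countably infinite
        obtain ⟨t1, ht1⟩ := hexu_tA s hs
        obtain ⟨t2, ht2⟩ := hexu_tB s (fun h => hs ((hABc s).mpr h))
        have hinf1 : ({x | a x = s ∧ x ∈ D} : Set X).Infinite := by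
          refine (hR'inf (s, t1) ht1).mono ?_
          intro x hx
          exact ⟨((hVmem _ x).1 (hR'V _ hx)).1, hR'D _ hx⟩
        have hinf2 : ({w : X | b w = s ∧ w ∈ D} : Set X).Infinite := by
          refine (hR'inf (t2, s) ht2).mono ?_
          intro x hx
          exact ⟨((hVmem _ x).1 (hR'V _ hx)).2, hR'D _ hx⟩
        haveI := hinf1.to_subtype
        haveI hi2 := hinf2.to_subtype
        haveI : Infinite ({z : X | z ∈ D ∧ b (S z) = s} : Set X) :=
          (hE1 s).infinite_iff.mpr hi2
        exact nonempty_equiv_of_countable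
  have φQ := fun o => (hφQ o).some
  have hPQpart : ∀ x : X, ∃! o : Option (Fin n → Bool),
      x ∈ (Option.elim o (Dᶜ) fun s => {x | a x = s ∧ x ∈ D} : Set X) := by
    intro x
    by_cases hx : x ∈ D
    · refine ⟨some (a x), ⟨rfl, hx⟩, ?_⟩
      rintro (_ | s) h
      · exact absurd hx h
      · rw [show s = a x from h.1.symm]
    · refine ⟨none, hx, ?_⟩
      rintro (_ | s) h
      · rfl
      · exact absurd h.2 hx
  have hTQpart : ∀ y : X, ∃! o : Option (Fin n → Bool),
      y ∈ (Option.elim o (Dᶜ) fun s => {z | z ∈ D ∧ b (S z) = s} : Set X) := by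
    intro y
    by_cases hy : y ∈ D
    · refine ⟨some (b (S y)), ⟨hy, rfl⟩, ?_⟩
      rintro (_ | s) h
      · exact absurd hy h
      · rw [show s = b (S y) from h.2.symm]
    · refine ⟨none, hy, ?_⟩
      rintro (_ | s) h
      · rfl
      · exact absurd h.1 hy
  obtain ⟨Q, hQmes, hQsmes, hQpt⟩ := exists_glue_perm
    (fun o => (Option.elim o (Dᶜ) fun s => {x | a x = s ∧ x ∈ D} : Set X))
    (fun o => (Option.elim o (Dᶜ) fun s => {z | z ∈ D ∧ b (S z) = s} : Set X))
    (by
      rintro (_ | s)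
      · exact hDm.compl
      · exact (hDc.mono (fun x hx => hx.2)).measurableSet)
    (by
      rintro (_ | s)
      · exact hDm.compl
      · exact (hDc.mono (fun x hx => hx.1)).measurableSet)
    hPQpart hTQpart (fun o => (φQ o).1)
  have hQid : ∀ x, x ∉ D → Q x = x := by
    intro x hx
    rw [hQpt none x hx]
    exact (φQ none).2 ⟨x, hx⟩ rfl
  have hQsupp : {x : X | Q x ≠ x} ⊆ D := by
    intro x hx
    by_contra h
    exact hx (hQid x h)
  have hQD : ∀ x, x ∈ D → (Q x ∈ D ∧ b (S (Q x)) = a x) := by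
    intro x hx
    rw [hQpt (some (a x)) x ⟨rfl, hx⟩]
    exact ((φQ (some (a x))).1 ⟨x, ⟨rfl, hx⟩⟩).2
  -- final identity
  have hab : ∀ x, b ((S * Q) x) = a x := by
    intro x
    have hmul : (S * Q) x = S (Q x) := rfl
    rw [hmul]
    by_cases hx : x ∈ D
    · exact (hQD x hx).2
    · rw [hQid x hx]
      exact (hSnD x hx).2
  have hTab : ∀ x, b (T x) = a x := hbT
  have himg : ∀ (f : Equiv.Perm X), (∀ x, b (f x) = a x) →
      ∀ (U : Set (Fin n → Bool)), ⇑f '' (a ⁻¹' U) = b ⁻¹' U := by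
    intro f hf U
    ext y
    constructor
    · rintro ⟨x, hx, rfl⟩
      show b (f x) ∈ U
      rw [hf x]
      exact hx
    · intro hy
      refine ⟨f.symm y, ?_, by rw [Equiv.apply_symm_apply]⟩
      show a (f.symm y) ∈ U
      rw [← hf (f.symm y), Equiv.apply_symm_apply]
      exact hy
  have hFi : ∀ i, F i = a ⁻¹' {s : Fin n → Bool | s i = true} := by
    intro i
    ext x
    simp only [mem_preimage, mem_setOf_eq]
    exact (hadef x i).symm
  refine ⟨S, Q, ⟨hSmes, hSsmes⟩, hSaper, ⟨hQmes, hQsmes⟩, hDc.mono hQsupp, ?_⟩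
  intro i
  rw [hFi i, himg (S * Q) hab _, himg T hTab _]
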